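/- Let G be a group, h : G → ℝ a function, and D ≥ 0 with |h(γ₁γ₂) − h(γ₁) − h(γ₂)| ≤ D for all γ₁, γ₂ ∈ G, and suppose h is unbounded on G (for every M there is g ∈ G with |h(g)| > M). Suppose given finitely many finite sequences of subgroups (Q_{j,1}, …, Q_{j,m_j}) for j = 1, …, r, and B ≥ 0 such that |h(q)| ≤ B whenever q belongs to any of the subgroups Q_{j,i}. Then the union over j = 1, …, r of the product sets Q_{j,1}Q_{j,2}⋯Q_{j,m_j} is a proper subset of G. -/

import Mathlib

lemma quasihom_list_bound {G : Type*} [Group G]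
    (h : G → ℝ) (D : ℝ) (hD : 0 ≤ D)
    (hdef : ∀ γ₁ γ₂ : G, |h (γ₁ * γ₂) - h γ₁ - h γ₂| ≤ D)
    (B : ℝ) :
    ∀ l : List G, (∀ x ∈ l, |h x| ≤ B) → |h l.prod| ≤ l.length * (B + D) + D := by
  intro l
  induction l with
  | nil =>
    intro _
    simp only [List.prod_nil, List.length_nil]
    have := hdef 1 1
    simp at this
    push_cast
    have : |h (1 : G)| ≤ D := by
      have h1 := hdef 1 1
      rw [one_mul] at h1
      have : |(-(h (1:G)))| ≤ D := by
        convert h1 using 2; ring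
      rwa [abs_neg] at this
    linarith
  | cons a l ih =>
    intro hx
    have ha : |h a| ≤ B := hx a List.mem_cons_self
    have hl := ih (fun x hxl => hx x (List.mem_cons_of_mem a hxl))
    have hd := hdef a l.prod
    have : |h (a * l.prod)| ≤ |h a| + |h l.prod| + D := by
      have := abs_add_le (h (a * l.prod) - h a - h l.prod) (h a + h l.prod)
      simp only [sub_sub, sub_add_cancel] at this
      calc |h (a * l.prod)| = |(h (a * l.prod) - h a - h l.prod) + (h a + h l.prod)| := by
            ring_nf
        _ ≤ |h (a * l.prod) - h a - h l.prod| + |h a + h l.prod| := abs_add_le _ _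
        _ ≤ D + (|h a| + |h l.prod|) := add_le_add hd (abs_add_le _ _)
        _ = |h a| + |h l.prod| + D := by ring
    simp only [List.prod_cons, List.length_cons]
    push_cast
    linarith

/-- If a quasi-homomorphism `h` with defect bound `D` is unbounded on `G` and bounded
by `B` on each member of finitely many finite sequences of subgroups
`(Q_{j,1}, …, Q_{j,m_j})`, `j = 1, …, r`, then the union of the product sets
`Q_{j,1}Q_{j,2}⋯Q_{j,m_j}` is a proper subset of `G`. -/
theorem union_of_product_sets_proper_of_unbounded_quasihom {G : Type*} [Group G]
    (h : G → ℝ) (D : ℝ) (hD : 0 ≤ D)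
    (hdef : ∀ γ₁ γ₂ : G, |h (γ₁ * γ₂) - h γ₁ - h γ₂| ≤ D)
    (hub : ∀ M : ℝ, ∃ g : G, M < |h g|)
    {r : ℕ} (m : Fin r → ℕ) (Q : (j : Fin r) → Fin (m j) → Subgroup G)
    (B : ℝ) (hB : 0 ≤ B)
    (hQ : ∀ (j : Fin r) (i : Fin (m j)), ∀ q ∈ Q j i, |h q| ≤ B) :
    ∃ g : G, ∀ j : Fin r,
      ¬ ∃ q : Fin (m j) → G, (∀ i, q i ∈ Q j i) ∧ (List.ofFn q).prod = g := by
  set N : ℕ := Finset.univ.sup m with hN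
  obtain ⟨g, hg⟩ := hub ((N : ℝ) * (B + D) + D)
  refine ⟨g, fun j ⟨q, hq, hqg⟩ => ?_⟩
  have hbound := quasihom_list_bound h D hD hdef B (List.ofFn q)
    (by
      intro x hx
      obtain ⟨i, rfl⟩ := List.mem_ofFn.mp hx
      exact hQ j i _ (hq i))
  rw [hqg, List.length_ofFn] at hbound
  have hmN : (m j : ℝ) ≤ (N : ℝ) := by
    exact_mod_cast Finset.le_sup (Finset.mem_univ j)
  have : |h g| ≤ (N : ℝ) * (B + D) + D := by
    calc |h g| ≤ (m j : ℝ) * (B + D) + D := hbound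
      _ ≤ (N : ℝ) * (B + D) + D := by nlinarith
  linarith
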